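/- arXiv:2507.18909 — 2 statements merged into one kernel-verified Lean document; each statement's English description precedes it below -/
import Mathlib

section
/- Let A12 ∈ ℝ^{n1×n2} have full column rank with n2 < n1, let R = I_{n1} − A12(A12ᵀA12)⁻¹A12ᵀ, let k be a positive integer, let L ∈ ℝ^{n1^k × n1^k} be an arbitrary square matrix, and set M = M_k(A12). Then the rank of the block matrix [[L, M], [Mᵀ, 0]] equals 2(n1^k − (n1 − n2)^k) + rank(R^{⊗k} L R^{⊗k}). -/
open Matrix

noncomputable section

/-- Position-dependent Kronecker product of square matrices: the entry at
row `r` and column `c` is `∏ j, F j (r j) (c j)`. -/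
def posKron {n k : ℕ} (F : Fin k → Matrix (Fin n) (Fin n) ℝ) :
    Matrix (Fin k → Fin n) (Fin k → Fin n) ℝ :=
  Matrix.of fun r c => ∏ j, F j (r j) (c j)

/-- The `k`-fold Kronecker power `X^{⊗k}`. -/
def kronPow {n : ℕ} (k : ℕ) (X : Matrix (Fin n) (Fin n) ℝ) :
    Matrix (Fin k → Fin n) (Fin k → Fin n) ℝ :=
  posKron fun _ => X

/-- Number of columns of the `j`-th Kronecker factor in the `i`-th block of `M_k^B(A)`. -/
def mCol (q p n : ℕ) {k : ℕ} (i j : Fin k) : ℕ :=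
  if j < i then q else if j = i then p else n

/-- The `i`-th block `B^{⊗(i-1)} ⊗ A ⊗ I_n^{⊗(k-i)}` of `M_k^B(A)`. -/
def mBlock {n p q k : ℕ} (B : Matrix (Fin n) (Fin q) ℝ) (A : Matrix (Fin n) (Fin p) ℝ)
    (i : Fin k) : Matrix (Fin k → Fin n) (∀ j : Fin k, Fin (mCol q p n i j)) ℝ :=
  Matrix.of fun r c => ∏ j : Fin k,
    if h1 : j < i then B (r j) (Fin.cast (by simp [mCol, h1]) (c j))
    else if h2 : j = i then A (r j) (Fin.cast (by simp [mCol, h1, h2]) (c j))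
    else (1 : Matrix (Fin n) (Fin n) ℝ) (r j) (Fin.cast (by simp [mCol, h1, h2]) (c j))

/-- The horizontal block concatenation `M_k^B(A)`, with blocks indexed by `i : Fin k`. -/
def mFull {n p q : ℕ} (k : ℕ) (B : Matrix (Fin n) (Fin q) ℝ) (A : Matrix (Fin n) (Fin p) ℝ) :
    Matrix (Fin k → Fin n) (Σ i : Fin k, ∀ j : Fin k, Fin (mCol q p n i j)) ℝ :=
  Matrix.of fun r c => mBlock B A c.1 r c.2

section helpers

variable {n k : ℕ}

lemma posKron_mul (F G : Fin k → Matrix (Fin n) (Fin n) ℝ) :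
    posKron F * posKron G = posKron fun j => F j * G j := by
  ext r c
  simp only [posKron, mul_apply, of_apply]
  calc ∑ s : Fin k → Fin n, (∏ j, F j (r j) (s j)) * ∏ j, G j (s j) (c j)
      = ∑ s : Fin k → Fin n, ∏ j, (F j (r j) (s j) * G j (s j) (c j)) := by
        simp_rw [Finset.prod_mul_distrib]
    _ = ∏ j, ∑ t, F j (r j) t * G j t (c j) := (Fintype.prod_sum fun j t => F j (r j) t * G j t (c j)).symm

lemma posKron_one : posKron (fun _ : Fin k => (1 : Matrix (Fin n) (Fin n) ℝ)) = 1 := by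
  ext r c
  simp only [posKron, of_apply, Matrix.one_apply]
  rw [Finset.prod_boole]
  simp [funext_iff]

lemma posKron_transpose (F : Fin k → Matrix (Fin n) (Fin n) ℝ) :
    (posKron F)ᵀ = posKron fun j => (F j)ᵀ := by
  ext r c; simp [posKron, transpose_apply]

lemma trace_posKron (F : Fin k → Matrix (Fin n) (Fin n) ℝ) :
    (posKron F).trace = ∏ j, (F j).trace := by
  simp only [Matrix.trace, Matrix.diag, posKron, of_apply]
  exact (Fintype.prod_sum fun j t => F j t t).symm

end helpers

section split

variable {n k : ℕ}

/-- Recombine a value at position `i` with values elsewhere. -/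
def recomb (i : Fin k) (u : Fin n) (g : {j : Fin k // j ≠ i} → Fin n) : Fin k → Fin n :=
  fun j => if h : j = i then u else g ⟨j, h⟩

@[simp] lemma recomb_same (i : Fin k) (u : Fin n) (g : {j : Fin k // j ≠ i} → Fin n) :
    recomb i u g i = u := dif_pos rfl

lemma recomb_ne (i : Fin k) (u : Fin n) (g) {j : Fin k} (h : j ≠ i) :
    recomb i u g j = g ⟨j, h⟩ := dif_neg h

lemma recomb_eq_update (i : Fin k) (u u' : Fin n) (g : {j : Fin k // j ≠ i} → Fin n) :
    recomb i u g = Function.update (recomb i u' g) i u := by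
  funext j
  rcases eq_or_ne j i with rfl | h
  · simp
  · rw [Function.update_of_ne h, recomb_ne _ _ _ h, recomb_ne _ _ _ h]

lemma update_eq_recomb (d : Fin k → Fin n) (i : Fin k) (u : Fin n) :
    Function.update d i u = recomb i u (fun j => d j) := by
  funext j
  rcases eq_or_ne j i with rfl | h
  · simp
  · rw [Function.update_of_ne h, recomb_ne _ _ _ h]

/-- Splitting equivalence at position `i`. -/
def splitAt (i : Fin k) : (Fin n × ({j : Fin k // j ≠ i} → Fin n)) ≃ (Fin k → Fin n) where
  toFun p := recomb i p.1 p.2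
  invFun s := (s i, fun j => s j)
  left_inv p := by
    ext j
    · simp
    · exact congrArg Fin.val ((recomb_ne _ _ _ j.2).trans (by cases j; rfl))
  right_inv s := by
    funext j
    rcases eq_or_ne j i with rfl | h
    · simp
    · exact recomb_ne _ _ _ h

lemma split_sum (i : Fin k) (v : Fin k → Fin n → ℝ) (h : (Fin k → Fin n) → ℝ) :
    ∑ s : Fin k → Fin n, (∏ j ∈ Finset.univ.erase i, v j (s j)) * h s
      = ∑ g : {j : Fin k // j ≠ i} → Fin n,
          (∏ j : {j : Fin k // j ≠ i}, v j.1 (g j)) * ∑ u : Fin n, h (recomb i u g) := by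
  rw [← Equiv.sum_comp (splitAt i)]
  rw [Fintype.sum_prod_type]
  rw [Finset.sum_comm]
  refine Finset.sum_congr rfl fun g _ => ?_
  rw [Finset.mul_sum]
  refine Finset.sum_congr rfl fun u _ => ?_
  have hprod : (∏ j ∈ Finset.univ.erase i, v j ((splitAt i (u, g)) j))
      = ∏ j : {j : Fin k // j ≠ i}, v j.1 (g j) := by
    rw [Finset.prod_subtype (p := fun j => j ≠ i) (Finset.univ.erase i) (fun j => by simp)
      (fun j => v j (splitAt i (u,g) j))]
    refine Finset.prod_congr rfl fun j _ => ?_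
    simp [splitAt, recomb_ne _ _ _ j.2]
  rw [hprod]
  rfl

lemma collapse_sum (i : Fin k) (d : Fin k → Fin n) (h : (Fin k → Fin n) → ℝ) :
    ∑ s : Fin k → Fin n,
        (∏ j ∈ Finset.univ.erase i, (if (s j : ℕ) = (d j : ℕ) then (1:ℝ) else 0)) * h s
      = ∑ u : Fin n, h (Function.update d i u) := by
  rw [split_sum i (fun j a => if (a : ℕ) = (d j : ℕ) then (1:ℝ) else 0) h]
  have key : ∀ g : {j : Fin k // j ≠ i} → Fin n,
      (∏ j : {j : Fin k // j ≠ i}, if ((g j : Fin n) : ℕ) = (d j.1 : ℕ) then (1:ℝ) else 0)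
        = if g = (fun j => d j.1) then 1 else 0 := by
    intro g
    rw [Finset.prod_boole]
    congr 1
    simp only [funext_iff, eq_iff_iff]
    constructor
    · intro hh j; exact Fin.ext (hh j (Finset.mem_univ j))
    · intro hh j _; rw [hh j]
  simp_rw [key, ite_mul, one_mul, zero_mul]
  rw [Finset.sum_ite_eq' Finset.univ (fun j => d j.1)
    (fun g => ∑ u : Fin n, h (recomb i u g))]
  simp only [Finset.mem_univ, if_true]
  refine Finset.sum_congr rfl fun u _ => ?_
  rw [update_eq_recomb]

section entry

variable {n1 n2 k : ℕ}

lemma mCol_self (i : Fin k) : mCol n1 n2 n1 i i = n2 := by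
  simp [mCol]

lemma mCol_ne {i j : Fin k} (h : j ≠ i) : mCol n1 n2 n1 i j = n1 := by
  rcases lt_or_ge j i with hl | hl
  · simp [mCol, hl]
  · have : ¬ j < i := not_lt.mpr hl
    simp [mCol, this, h]

lemma mBlock_one_apply (A : Matrix (Fin n1) (Fin n2) ℝ) (i : Fin k)
    (r : Fin k → Fin n1) (c : ∀ j : Fin k, Fin (mCol n1 n2 n1 i j)) :
    mBlock (1 : Matrix (Fin n1) (Fin n1) ℝ) A i r c
      = A (r i) (Fin.cast (mCol_self i) (c i)) *
        ∏ j ∈ Finset.univ.erase i, (if ((r j : ℕ)) = ((c j : ℕ)) then (1:ℝ) else 0) := by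
  rw [mBlock, Matrix.of_apply, ← Finset.mul_prod_erase Finset.univ _ (Finset.mem_univ i)]
  congr 1
  · rw [dif_neg (lt_irrefl i), dif_pos rfl]
  · refine Finset.prod_congr rfl fun j hj => ?_
    have hji : j ≠ i := (Finset.mem_erase.mp hj).1
    rcases lt_or_ge j i with hl | hl
    · rw [dif_pos hl, Matrix.one_apply]
      simp [Fin.ext_iff]
    · rw [dif_neg (not_lt.mpr hl), dif_neg hji, Matrix.one_apply]
      simp [Fin.ext_iff]

/-- The canonical column of block `i` determined by `d` off `i` and `t` at `i`. -/
def colOf (i : Fin k) (d : Fin k → Fin n1) (t : Fin n2) (hn : n2 < n1) :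
    ∀ j : Fin k, Fin (mCol n1 n2 n1 i j) :=
  fun j =>
    ⟨if j = i then (t : ℕ) else (d j : ℕ), by
      rcases eq_or_ne j i with rfl | h
      · simpa [mCol_self] using t.isLt
      · rw [if_neg h, mCol_ne h]; exact (d j).isLt⟩

@[simp] lemma colOf_self (i : Fin k) (d : Fin k → Fin n1) (t : Fin n2) (hn : n2 < n1) :
    ((colOf i d t hn i : Fin (mCol n1 n2 n1 i i)) : ℕ) = (t : ℕ) := by
  simp [colOf]

lemma colOf_ne (i : Fin k) (d : Fin k → Fin n1) (t : Fin n2) (hn : n2 < n1) {j : Fin k}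
    (h : j ≠ i) : ((colOf i d t hn j : Fin (mCol n1 n2 n1 i j)) : ℕ) = (d j : ℕ) := by
  simp [colOf, h]

end entry

section kernel

variable {n1 n2 k : ℕ}

lemma hH_block (hn : n2 < n1) (A : Matrix (Fin n1) (Fin n2) ℝ)
    (x : (Fin k → Fin n1) → ℝ)
    (hx : (mFull k (1 : Matrix (Fin n1) (Fin n1) ℝ) A)ᵀ *ᵥ x = 0)
    (i : Fin k) (d : Fin k → Fin n1) (t : Fin n2) :
    ∑ u : Fin n1, A u t * x (Function.update d i u) = 0 := by
  have h0 := congrFun hx ⟨i, colOf i d t hn⟩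
  simp only [mulVec, dotProduct, transpose_apply, Pi.zero_apply] at h0
  have key : ∑ s : Fin k → Fin n1,
      (∏ j ∈ Finset.univ.erase i, (if ((s j : ℕ)) = ((d j : ℕ)) then (1:ℝ) else 0)) *
        (A (s i) t * x s) = 0 := by
    refine Eq.trans (Finset.sum_congr rfl fun s _ => ?_) h0
    have h1 : mFull k (1 : Matrix (Fin n1) (Fin n1) ℝ) A s ⟨i, colOf i d t hn⟩
        = mBlock (1 : Matrix (Fin n1) (Fin n1) ℝ) A i s (colOf i d t hn) := rfl
    rw [h1, mBlock_one_apply]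
    have h2 : Fin.cast (mCol_self i) (colOf i d t hn i) = t := by
      apply Fin.ext; simp
    rw [h2]
    have h3 : (∏ j ∈ Finset.univ.erase i,
        (if ((s j : ℕ)) = ((colOf i d t hn j : ℕ)) then (1:ℝ) else 0))
        = ∏ j ∈ Finset.univ.erase i, (if ((s j : ℕ)) = ((d j : ℕ)) then (1:ℝ) else 0) := by
      refine Finset.prod_congr rfl fun j hj => ?_
      rw [colOf_ne i d t hn (Finset.mem_erase.mp hj).1]
    rw [h3]
    ring
  rw [collapse_sum i d (fun s => A (s i) t * x s)] at key
  simpa using key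

/-- Kronecker factor list: `R` in the first `m` slots, identity elsewhere. -/
def pfun (R : Matrix (Fin n1) (Fin n1) ℝ) (m : ℕ) : Fin k → Matrix (Fin n1) (Fin n1) ℝ :=
  fun j => if (j : ℕ) < m then R else 1

def kfun (R : Matrix (Fin n1) (Fin n1) ℝ) (m : ℕ) : Fin k → Matrix (Fin n1) (Fin n1) ℝ :=
  fun j => if (j : ℕ) < m then R else if (j : ℕ) = m then 1 - R else 1

lemma pfun_split (R : Matrix (Fin n1) (Fin n1) ℝ) (m : ℕ) (hm : m < k) :
    posKron (pfun R m) = posKron (pfun R (m+1)) + posKron (kfun (k := k) R m) := by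
  ext r c
  set i : Fin k := ⟨m, hm⟩ with hi
  have hfact : ∀ (F : Fin k → Matrix (Fin n1) (Fin n1) ℝ),
      posKron F r c = F i (r i) (c i) * ∏ j ∈ Finset.univ.erase i, F j (r j) (c j) := by
    intro F
    rw [posKron, Matrix.of_apply, ← Finset.mul_prod_erase Finset.univ _ (Finset.mem_univ i)]
  have hoff : ∀ j ∈ Finset.univ.erase i,
      pfun (k := k) R m j (r j) (c j) = pfun (k := k) R (m+1) j (r j) (c j)
      ∧ pfun (k := k) R m j (r j) (c j) = kfun (k := k) R m j (r j) (c j) := by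
    intro j hj
    have hji : (j : ℕ) ≠ m := fun h => (Finset.mem_erase.mp hj).1 (Fin.ext (by simp [hi, h]))
    have : ((j : ℕ) < m + 1) ↔ ((j : ℕ) < m) := by omega
    constructor <;> · simp only [pfun, kfun, this, hji, if_false]
  have e1 := Finset.prod_congr rfl (fun j hj => (hoff j hj).1)
  have e2 := Finset.prod_congr rfl (fun j hj => (hoff j hj).2)
  rw [Matrix.add_apply, hfact, hfact, hfact, ← e1, ← e2]
  have hpm : pfun (k := k) R m i (r i) (c i) = (1 : Matrix (Fin n1) (Fin n1) ℝ) (r i) (c i) := by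
    simp [pfun, hi]
  have hp1 : pfun (k := k) R (m+1) i (r i) (c i) = R (r i) (c i) := by
    simp [pfun, hi]
  have hk : kfun (k := k) R m i (r i) (c i) = ((1 : Matrix (Fin n1) (Fin n1) ℝ) - R) (r i) (c i) := by
    simp [kfun, hi]
  rw [hpm, hp1, hk, Matrix.sub_apply]
  ring

lemma kfun_mulVec_zero (hn : n2 < n1) (A : Matrix (Fin n1) (Fin n2) ℝ)
    (C : Matrix (Fin n2) (Fin n2) ℝ) (R : Matrix (Fin n1) (Fin n1) ℝ)
    (hdec : (1 : Matrix (Fin n1) (Fin n1) ℝ) - R = A * C * Aᵀ)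
    (x : (Fin k → Fin n1) → ℝ)
    (hx : (mFull k (1 : Matrix (Fin n1) (Fin n1) ℝ) A)ᵀ *ᵥ x = 0)
    (m : ℕ) (hm : m < k) :
    posKron (kfun (k := k) R m) *ᵥ x = 0 := by
  funext r
  set i : Fin k := ⟨m, hm⟩ with hi
  have hn1 : 0 < n1 := lt_of_le_of_lt (Nat.zero_le _) hn
  simp only [mulVec, dotProduct, posKron, Matrix.of_apply, Pi.zero_apply]
  have step1 : ∀ s : Fin k → Fin n1,
      (∏ j, kfun (k := k) R m j (r j) (s j)) * x s
        = (∏ j ∈ Finset.univ.erase i, kfun (k := k) R m j (r j) (s j)) *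
            (((1 : Matrix (Fin n1) (Fin n1) ℝ) - R) (r i) (s i) * x s) := by
    intro s
    rw [← Finset.mul_prod_erase Finset.univ _ (Finset.mem_univ i)]
    have : kfun (k := k) R m i (r i) (s i)
        = ((1 : Matrix (Fin n1) (Fin n1) ℝ) - R) (r i) (s i) := by simp [kfun, hi]
    rw [this]; ring
  simp_rw [step1]
  rw [split_sum i (fun j a => kfun (k := k) R m j (r j) a)
    (fun s => ((1 : Matrix (Fin n1) (Fin n1) ℝ) - R) (r i) (s i) * x s)]
  apply Finset.sum_eq_zero
  intro g _
  have hinner : (∑ u : Fin n1,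
      ((1 : Matrix (Fin n1) (Fin n1) ℝ) - R) (r i) ((recomb i u g) i) * x (recomb i u g)) = 0 := by
    have hrc : ∀ u : Fin n1, recomb i u g = Function.update (recomb i ⟨0, hn1⟩ g) i u :=
      fun u => recomb_eq_update i u ⟨0, hn1⟩ g
    calc ∑ u : Fin n1, ((1 : Matrix (Fin n1) (Fin n1) ℝ) - R) (r i) ((recomb i u g) i) * x (recomb i u g)
        = ∑ u : Fin n1, (∑ t : Fin n2, (A * C) (r i) t * A u t) * x (Function.update (recomb i ⟨0, hn1⟩ g) i u) := by
          refine Finset.sum_congr rfl fun u _ => ?_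
          rw [recomb_same, hdec, hrc u]
          congr 1
      _ = ∑ t : Fin n2, (A * C) (r i) t * ∑ u : Fin n1, A u t * x (Function.update (recomb i ⟨0, hn1⟩ g) i u) := by
          simp_rw [Finset.sum_mul]
          rw [Finset.sum_comm]
          simp_rw [mul_assoc, ← Finset.mul_sum]
      _ = 0 := by
          refine Finset.sum_eq_zero fun t _ => ?_
          rw [hH_block hn A x hx i _ t, mul_zero]
  rw [hinner, mul_zero]

lemma ppart_fixed (hn : n2 < n1) (A : Matrix (Fin n1) (Fin n2) ℝ)
    (C : Matrix (Fin n2) (Fin n2) ℝ) (R : Matrix (Fin n1) (Fin n1) ℝ)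
    (hdec : (1 : Matrix (Fin n1) (Fin n1) ℝ) - R = A * C * Aᵀ)
    (x : (Fin k → Fin n1) → ℝ)
    (hx : (mFull k (1 : Matrix (Fin n1) (Fin n1) ℝ) A)ᵀ *ᵥ x = 0) :
    ∀ m, m ≤ k → posKron (pfun (k := k) R m) *ᵥ x = x := by
  intro m
  induction m with
  | zero =>
    intro _
    have : pfun (k := k) R 0 = fun _ => (1 : Matrix (Fin n1) (Fin n1) ℝ) := by
      funext j; simp [pfun]
    rw [this, posKron_one, Matrix.one_mulVec]
  | succ m ih =>
    intro hm1
    have hm : m < k := hm1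
    have hsplit := pfun_split (k := k) (n1 := n1) R m hm
    have := ih (le_of_lt hm)
    rw [hsplit, Matrix.add_mulVec, kfun_mulVec_zero hn A C R hdec x hx m hm, add_zero] at this
    exact this

lemma kron_fixed (hn : n2 < n1) (A : Matrix (Fin n1) (Fin n2) ℝ)
    (C : Matrix (Fin n2) (Fin n2) ℝ) (R : Matrix (Fin n1) (Fin n1) ℝ)
    (hdec : (1 : Matrix (Fin n1) (Fin n1) ℝ) - R = A * C * Aᵀ)
    (x : (Fin k → Fin n1) → ℝ)
    (hx : (mFull k (1 : Matrix (Fin n1) (Fin n1) ℝ) A)ᵀ *ᵥ x = 0) :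
    kronPow k R *ᵥ x = x := by
  have hfe : (fun _ : Fin k => R) = pfun (k := k) R k := by
    funext j; simp [pfun, j.isLt]
  have : kronPow k R = posKron (pfun (k := k) R k) := by
    unfold kronPow; rw [hfe]
  rw [this]
  exact ppart_fixed hn A C R hdec x hx k le_rfl

lemma kron_mul_mFull (A : Matrix (Fin n1) (Fin n2) ℝ) (R : Matrix (Fin n1) (Fin n1) ℝ)
    (hRA : R * A = 0) :
    kronPow k R * mFull k (1 : Matrix (Fin n1) (Fin n1) ℝ) A = 0 := by
  ext r y
  obtain ⟨i, c⟩ := y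
  simp only [Matrix.mul_apply, Matrix.zero_apply]
  have step1 : ∀ s : Fin k → Fin n1,
      kronPow k R r s * mFull k (1 : Matrix (Fin n1) (Fin n1) ℝ) A s ⟨i, c⟩
        = (∏ j ∈ Finset.univ.erase i,
            (R (r j) (s j) * (if ((s j : ℕ)) = ((c j : ℕ)) then (1:ℝ) else 0))) *
          (R (r i) (s i) * A (s i) (Fin.cast (mCol_self i) (c i))) := by
    intro s
    have h1 : mFull k (1 : Matrix (Fin n1) (Fin n1) ℝ) A s ⟨i, c⟩
        = mBlock (1 : Matrix (Fin n1) (Fin n1) ℝ) A i s c := rfl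
    have h2 : kronPow k R r s = R (r i) (s i) * ∏ j ∈ Finset.univ.erase i, R (r j) (s j) := by
      rw [kronPow, posKron, Matrix.of_apply,
        ← Finset.mul_prod_erase Finset.univ _ (Finset.mem_univ i)]
    rw [h1, mBlock_one_apply, h2, Finset.prod_mul_distrib]
    ring
  simp_rw [step1]
  rw [split_sum i (fun j a => R (r j) a * (if ((a : ℕ)) = ((c j : ℕ)) then (1:ℝ) else 0))
    (fun s => R (r i) (s i) * A (s i) (Fin.cast (mCol_self i) (c i)))]
  apply Finset.sum_eq_zero
  intro g _
  have : (∑ u : Fin n1, R (r i) ((recomb i u g) i) * A ((recomb i u g) i) (Fin.cast (mCol_self i) (c i))) = 0 := by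
    simp only [recomb_same]
    rw [← Matrix.mul_apply, hRA, Matrix.zero_apply]
  rw [this, mul_zero]

end kernel

section rankhelpers

open Module

/-- The submodule product equivalence. -/
def prodSubEquiv {M N : Type*} [AddCommGroup M] [AddCommGroup N] [Module ℝ M] [Module ℝ N]
    (p : Submodule ℝ M) (q : Submodule ℝ N) : (p.prod q) ≃ₗ[ℝ] (p × q) where
  toFun x := (⟨x.1.1, x.2.1⟩, ⟨x.1.2, x.2.2⟩)
  map_add' x y := rfl
  map_smul' c x := rfl
  invFun x := ⟨(x.1.1, x.2.1), ⟨x.1.2, x.2.2⟩⟩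
  left_inv x := rfl
  right_inv x := rfl

lemma range_prodMap' {M N M' N' : Type*} [AddCommGroup M] [AddCommGroup N] [AddCommGroup M']
    [AddCommGroup N'] [Module ℝ M] [Module ℝ N] [Module ℝ M'] [Module ℝ N']
    (f : M →ₗ[ℝ] M') (g : N →ₗ[ℝ] N') :
    LinearMap.range (f.prodMap g) = (LinearMap.range f).prod (LinearMap.range g) := by
  ext ⟨a, b⟩
  constructor
  · rintro ⟨⟨x, y⟩, h⟩
    obtain ⟨h1, h2⟩ := Prod.mk.injEq .. ▸ h
    exact ⟨⟨x, h1⟩, ⟨y, h2⟩⟩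
  · rintro ⟨⟨x, hx⟩, ⟨y, hy⟩⟩
    exact ⟨(x, y), by simp [LinearMap.prodMap_apply, hx, hy]⟩

lemma rank_fromBlocks_diag {m n o p : Type*} [Fintype m] [Fintype n] [Fintype o] [Fintype p]
    [DecidableEq n] [DecidableEq p]
    (A : Matrix m n ℝ) (D : Matrix o p ℝ) :
    (Matrix.fromBlocks A 0 0 D).rank = A.rank + D.rank := by
  have hmap : (Matrix.fromBlocks A 0 0 D).mulVecLin
      = ((LinearEquiv.sumArrowLequivProdArrow m o ℝ ℝ).symm.toLinearMap) ∘ₗ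
          ((A.mulVecLin.prodMap D.mulVecLin) ∘ₗ
            (LinearEquiv.sumArrowLequivProdArrow n p ℝ ℝ).toLinearMap) := by
    apply LinearMap.ext
    intro x
    funext r
    cases r with
    | inl r =>
      simp [Matrix.mulVecLin_apply, Matrix.fromBlocks_mulVec,
        LinearEquiv.sumArrowLequivProdArrow, Equiv.sumArrowEquivProdArrow]
    | inr r =>
      simp [Matrix.mulVecLin_apply, Matrix.fromBlocks_mulVec,
        LinearEquiv.sumArrowLequivProdArrow, Equiv.sumArrowEquivProdArrow]
  rw [Matrix.rank, hmap, LinearMap.range_comp, LinearMap.range_comp,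
    LinearEquiv.range, Submodule.map_top, LinearEquiv.finrank_map_eq,
    range_prodMap']
  rw [(prodSubEquiv (LinearMap.range A.mulVecLin) (LinearMap.range D.mulVecLin)).finrank_eq]
  rw [Module.finrank_prod]
  rfl

lemma rank_submatrix_col_equiv {m n n' : Type*} [Fintype m] [Fintype n] [Fintype n']
    [DecidableEq n] [DecidableEq n'] (A : Matrix m n ℝ) (e : n' ≃ n) :
    (A.submatrix id e).rank = A.rank := by
  rw [Matrix.rank, Matrix.mulVecLin_submatrix, Matrix.rank]
  rw [LinearMap.range_comp, LinearMap.range_comp]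
  have h1 : LinearMap.funLeft ℝ ℝ (e.symm) = (LinearEquiv.funCongrLeft ℝ ℝ e.symm).toLinearMap := rfl
  rw [h1, LinearEquiv.range, Submodule.map_top]
  have h2 : LinearMap.funLeft ℝ ℝ (id : m → m) = LinearMap.id := by
    apply LinearMap.ext; intro x; rfl
  rw [h2, Submodule.map_id]

lemma rank_eq_trace_of_idem {m : Type*} [Fintype m] [DecidableEq m]
    (P : Matrix m m ℝ) (hP : P * P = P) :
    ((P.rank : ℝ)) = P.trace := by
  have hproj : LinearMap.IsProj (LinearMap.range P.mulVecLin) P.mulVecLin := by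
    constructor
    · intro x; exact LinearMap.mem_range_self _ x
    · rintro x ⟨y, rfl⟩
      show P *ᵥ (P *ᵥ y) = P *ᵥ y
      rw [Matrix.mulVec_mulVec, hP]
  have htr := hproj.trace
  have hmat : LinearMap.trace ℝ (m → ℝ) P.mulVecLin = P.trace := by
    rw [LinearMap.trace_eq_matrix_trace ℝ (Pi.basisFun ℝ m), LinearMap.toMatrix_eq_toMatrix']
    congr 1
    rw [show P.mulVecLin = Matrix.toLin' P from rfl, LinearMap.toMatrix'_toLin']
  rw [← hmat, htr, Matrix.rank]

end rankhelpers

section sandwich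

variable {ι σ : Type*} [Fintype ι] [Fintype σ] [DecidableEq ι] [DecidableEq σ]

lemma rank_fromBlocks_kernel_proj (Λ : Matrix ι ι ℝ) (M : Matrix ι σ ℝ) (P : Matrix ι ι ℝ)
    (hPsym : Pᵀ = P) (hPM : P * M = 0) (hPA : P * Λ = Λ) (hAP : Λ * P = Λ) :
    (Matrix.fromBlocks Λ M Mᵀ 0).rank = Λ.rank + (M.rank + Mᵀ.rank) := by
  have hMP : Mᵀ * P = 0 := by
    calc Mᵀ * P = (Pᵀ * M)ᵀ := by rw [Matrix.transpose_mul, Matrix.transpose_transpose]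
    _ = 0 := by rw [hPsym, hPM, Matrix.transpose_zero]
  set Q : Matrix ι ι ℝ := 1 - P with hQ
  have hQM : Q * M = M := by rw [hQ, Matrix.sub_mul, Matrix.one_mul, hPM, sub_zero]
  have hMQ : Mᵀ * Q = Mᵀ := by rw [hQ, Matrix.mul_sub, Matrix.mul_one, hMP, sub_zero]
  have hQA : Q * Λ = 0 := by rw [hQ, Matrix.sub_mul, Matrix.one_mul, hPA, sub_self]
  have hAQ : Λ * Q = 0 := by rw [hQ, Matrix.mul_sub, Matrix.mul_one, hAP, sub_self]
  set Pi1 : Matrix (ι ⊕ σ) (ι ⊕ σ) ℝ := Matrix.fromBlocks P 0 0 0 with hP1x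
  set Pi2 : Matrix (ι ⊕ σ) (ι ⊕ σ) ℝ := Matrix.fromBlocks Q 0 0 1 with hP2x
  set T : Matrix (ι ⊕ σ) (ι ⊕ σ) ℝ := Matrix.fromBlocks Λ M Mᵀ 0 with hT
  set T₁ : Matrix (ι ⊕ σ) (ι ⊕ σ) ℝ := Matrix.fromBlocks Λ 0 0 0 with hT₁
  set T₂ : Matrix (ι ⊕ σ) (ι ⊕ σ) ℝ := Matrix.fromBlocks 0 M Mᵀ 0 with hT₂
  set E : Matrix ((ι ⊕ σ) ⊕ (ι ⊕ σ)) (ι ⊕ σ) ℝ := Matrix.fromRows Pi1 Pi2 with hE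
  set F : Matrix (ι ⊕ σ) ((ι ⊕ σ) ⊕ (ι ⊕ σ)) ℝ := Matrix.fromCols 1 1 with hF
  have hP1xsym : Pi1ᵀ = Pi1 := by
    rw [hP1x, Matrix.fromBlocks_transpose, hPsym]
    simp
  have hP2xsym : Pi2ᵀ = Pi2 := by
    have hQsym : Qᵀ = Q := by rw [hQ, Matrix.transpose_sub, Matrix.transpose_one, hPsym]
    rw [hP2x, Matrix.fromBlocks_transpose, hQsym]
    simp
  have hP1xT : Pi1 * T = T₁ := by
    rw [hP1x, hT, Matrix.fromBlocks_multiply]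
    simp [hPA, hPM, hT₁]
  have hP2xT : Pi2 * T = T₂ := by
    rw [hP2x, hT, Matrix.fromBlocks_multiply]
    simp [hQA, hQM, hT₂]
  have hT₁Pi1 : T₁ * Pi1 = T₁ := by
    rw [hT₁, hP1x, Matrix.fromBlocks_multiply]
    simp [hAP]
  have hT₁Pi2 : T₁ * Pi2 = 0 := by
    rw [hT₁, hP2x, Matrix.fromBlocks_multiply]
    simp [hAQ]
  have hT₂Pi1 : T₂ * Pi1 = 0 := by
    rw [hT₂, hP1x, Matrix.fromBlocks_multiply]
    simp [hMP]
  have hT₂Pi2 : T₂ * Pi2 = T₂ := by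
    rw [hT₂, hP2x, Matrix.fromBlocks_multiply]
    simp [hMQ]
  have hETE : E * T * Eᵀ = Matrix.fromBlocks T₁ 0 0 T₂ := by
    rw [hE, Matrix.transpose_fromRows, hP1xsym, hP2xsym, Matrix.fromRows_mul,
      hP1xT, hP2xT, Matrix.fromRows_mul, Matrix.mul_fromCols, Matrix.mul_fromCols,
      hT₁Pi1, hT₁Pi2, hT₂Pi1, hT₂Pi2, Matrix.fromRows_fromCols_eq_fromBlocks]
  have hFE : F * E = 1 := by
    rw [hF, hE, Matrix.fromCols_mul_fromRows, Matrix.one_mul, Matrix.one_mul, hP1x, hP2x,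
      Matrix.fromBlocks_add]
    simp [hQ]
  have le1 : (E * T * Eᵀ).rank ≤ T.rank :=
    le_trans (Matrix.rank_mul_le_left (E * T) Eᵀ) (Matrix.rank_mul_le_right E T)
  have le2 : T.rank ≤ (E * T * Eᵀ).rank := by
    have hback : F * (E * T * Eᵀ) * Fᵀ = T := by
      have h1 : F * (E * T * Eᵀ) * Fᵀ = (F * E) * T * (Eᵀ * Fᵀ) := by
        simp only [Matrix.mul_assoc]
      rw [h1, hFE, ← Matrix.transpose_mul, hFE, Matrix.transpose_one, Matrix.one_mul,
        Matrix.mul_one]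
    calc T.rank = (F * (E * T * Eᵀ) * Fᵀ).rank := by rw [hback]
      _ ≤ (F * (E * T * Eᵀ)).rank := Matrix.rank_mul_le_left _ _
      _ ≤ (E * T * Eᵀ).rank := Matrix.rank_mul_le_right _ _
  have heq : T.rank = (Matrix.fromBlocks T₁ 0 0 T₂).rank := by
    rw [← hETE]; exact le_antisymm le2 le1
  rw [heq, rank_fromBlocks_diag]
  have h1 : T₁.rank = Λ.rank := by
    rw [hT₁, rank_fromBlocks_diag, Matrix.rank_zero, add_zero]
  have h2 : T₂.rank = M.rank + Mᵀ.rank := by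
    have hsub : T₂ = (Matrix.fromBlocks M 0 0 Mᵀ).submatrix id (Equiv.sumComm ι σ) := by
      ext r c
      cases r <;> cases c <;> rfl
    rw [hT₂, ← hT₂, hsub, rank_submatrix_col_equiv, rank_fromBlocks_diag]
  rw [h1, h2]

end sandwich

section finalhelp

lemma isUnit_det_of_rank_eq_card {m : Type*} [Fintype m] [DecidableEq m]
    (B : Matrix m m ℝ) (h : B.rank = Fintype.card m) : IsUnit B.det := by
  rw [← Matrix.isUnit_iff_isUnit_det, ← Matrix.mulVec_surjective_iff_isUnit]
  have htop : LinearMap.range B.mulVecLin = ⊤ := by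
    apply Submodule.eq_top_of_finrank_eq
    rw [show Module.finrank ℝ (LinearMap.range B.mulVecLin) = B.rank from rfl, h,
      Module.finrank_fintype_fun_eq_card]
  intro y
  obtain ⟨x, hx⟩ := LinearMap.range_eq_top.mp htop y
  exact ⟨x, hx⟩

lemma dotProduct_self_nonneg' {m : Type*} [Fintype m] (v : m → ℝ) : 0 ≤ v ⬝ᵥ v :=
  Finset.sum_nonneg fun i _ => mul_self_nonneg (v i)

end finalhelp

/-- Let `A12 ∈ ℝ^{n1×n2}` have full column rank with `n2 < n1`,
`R = I - A12 (A12ᵀ A12)⁻¹ A12ᵀ`, `k` a positive integer, `L ∈ ℝ^{n1^k × n1^k}`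
arbitrary, and `M = M_k(A12)`.  Then
`rank [[L, M], [Mᵀ, 0]] = 2 (n1^k - (n1-n2)^k) + rank (R^{⊗k} L R^{⊗k})`. -/
theorem stmt12 {n1 n2 : ℕ} (hn : n2 < n1) (A12 : Matrix (Fin n1) (Fin n2) ℝ)
    (hA : A12.rank = n2)
    (R : Matrix (Fin n1) (Fin n1) ℝ)
    (hR : R = 1 - A12 * (A12ᵀ * A12)⁻¹ * A12ᵀ)
    (k : ℕ) (hk : 0 < k)
    (L : Matrix (Fin k → Fin n1) (Fin k → Fin n1) ℝ) :
    (Matrix.fromBlocks L (mFull k (1 : Matrix (Fin n1) (Fin n1) ℝ) A12)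
        (mFull k (1 : Matrix (Fin n1) (Fin n1) ℝ) A12)ᵀ 0).rank
      = 2 * (n1 ^ k - (n1 - n2) ^ k) + (kronPow k R * L * kronPow k R).rank := by
  classical
  set C : Matrix (Fin n2) (Fin n2) ℝ := (A12ᵀ * A12)⁻¹ with hC
  set M : Matrix (Fin k → Fin n1) (Σ i : Fin k, ∀ j : Fin k, Fin (mCol n1 n2 n1 i j)) ℝ :=
    mFull k (1 : Matrix (Fin n1) (Fin n1) ℝ) A12 with hM
  set P : Matrix (Fin k → Fin n1) (Fin k → Fin n1) ℝ := kronPow k R with hP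
  -- invertibility of A12ᵀ * A12
  have hdet : IsUnit (A12ᵀ * A12).det := by
    apply isUnit_det_of_rank_eq_card
    rw [Matrix.rank_transpose_mul_self, hA, Fintype.card_fin]
  have hCAA : C * (A12ᵀ * A12) = 1 := by rw [hC]; exact Matrix.nonsing_inv_mul _ hdet
  have hAAC : (A12ᵀ * A12) * C = 1 := by rw [hC]; exact Matrix.mul_nonsing_inv _ hdet
  have hdec : (1 : Matrix (Fin n1) (Fin n1) ℝ) - R = A12 * C * A12ᵀ := by
    rw [hR, sub_sub_cancel]
  have hRA : R * A12 = 0 := by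
    rw [hR, Matrix.sub_mul, Matrix.one_mul]
    have h : A12 * C * A12ᵀ * A12 = A12 := by
      calc A12 * C * A12ᵀ * A12 = A12 * (C * (A12ᵀ * A12)) := by
            simp only [Matrix.mul_assoc]
        _ = A12 := by rw [hCAA, Matrix.mul_one]
    rw [h, sub_self]
  have hRsym : Rᵀ = R := by
    rw [hR, Matrix.transpose_sub, Matrix.transpose_one, Matrix.transpose_mul,
      Matrix.transpose_mul, Matrix.transpose_transpose, Matrix.transpose_nonsing_inv,
      Matrix.transpose_mul, Matrix.transpose_transpose, Matrix.mul_assoc]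
  have hRR : R * R = R := by
    have h1 : (A12 * C * A12ᵀ) * (A12 * C * A12ᵀ) = A12 * C * A12ᵀ := by
      have h0 : A12ᵀ * (A12 * C) = 1 := by
        rw [← Matrix.mul_assoc]; exact hAAC
      calc (A12 * C * A12ᵀ) * (A12 * C * A12ᵀ) = A12 * C * (A12ᵀ * (A12 * C)) * A12ᵀ := by
            simp only [Matrix.mul_assoc]
        _ = A12 * C * A12ᵀ := by rw [h0, Matrix.mul_one]
    have h2 : R = 1 - A12 * C * A12ᵀ := hR
    rw [h2, Matrix.sub_mul, Matrix.one_mul, Matrix.mul_sub, Matrix.mul_one, h1, sub_self,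
      sub_zero]
  -- facts about P
  have hPsym : Pᵀ = P := by
    rw [hP, kronPow, posKron_transpose]
    simp [hRsym]
  have hPP : P * P = P := by
    rw [hP, kronPow, posKron_mul]
    simp [hRR]
  have hPM : P * M = 0 := kron_mul_mFull A12 R hRA
  have hMTP : Mᵀ * P = 0 := by
    calc Mᵀ * P = (Pᵀ * M)ᵀ := by rw [Matrix.transpose_mul, Matrix.transpose_transpose]
    _ = 0 := by rw [hPsym, hPM, Matrix.transpose_zero]
  -- rank of P
  have hPrank : P.rank = (n1 - n2) ^ k := by
    have h1 : ((P.rank : ℝ)) = P.trace := rank_eq_trace_of_idem P hPP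
    have htr1 : (A12 * C * A12ᵀ).trace = ((n2 : ℝ)) := by
      calc (A12 * C * A12ᵀ).trace = (A12ᵀ * (A12 * C)).trace := Matrix.trace_mul_comm _ _
        _ = ((A12ᵀ * A12) * C).trace := by rw [Matrix.mul_assoc]
        _ = (1 : Matrix (Fin n2) (Fin n2) ℝ).trace := by rw [hAAC]
        _ = ((n2 : ℝ)) := by rw [Matrix.trace_one, Fintype.card_fin]
    have h2 : R.trace = ((n1 : ℝ)) - n2 := by
      rw [hR, Matrix.trace_sub, Matrix.trace_one, Fintype.card_fin, htr1]
    have h3 : P.trace = (((n1 : ℝ)) - n2) ^ k := by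
      rw [hP, kronPow, trace_posKron]
      simp [h2]
    have h4 : ((P.rank : ℝ)) = (((n1 - n2 : ℕ) : ℝ)) ^ k := by
      rw [h1, h3, Nat.cast_sub hn.le]
    exact_mod_cast h4
  -- rank of M
  have hMrank : Mᵀ.rank + (n1 - n2) ^ k = n1 ^ k := by
    have hker : LinearMap.ker (Mᵀ.mulVecLin) = LinearMap.range (P.mulVecLin) := by
      ext x
      simp only [LinearMap.mem_ker, LinearMap.mem_range, Matrix.mulVecLin_apply]
      constructor
      · intro hx
        exact ⟨x, kron_fixed hn A12 C R hdec x hx⟩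
      · rintro ⟨y, rfl⟩
        rw [Matrix.mulVec_mulVec, hMTP, Matrix.zero_mulVec]
    have hrn := LinearMap.finrank_range_add_finrank_ker (Mᵀ.mulVecLin)
    rw [hker] at hrn
    have hd : Module.finrank ℝ ((Fin k → Fin n1) → ℝ) = n1 ^ k := by
      rw [Module.finrank_fintype_fun_eq_card, Fintype.card_fun, Fintype.card_fin,
        Fintype.card_fin]
    rw [hd] at hrn
    rw [show Mᵀ.rank = Module.finrank ℝ (LinearMap.range Mᵀ.mulVecLin) from rfl]
    rw [show Module.finrank ℝ (LinearMap.range P.mulVecLin) = P.rank from rfl] at hrn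
    rw [← hPrank]
    exact hrn
  have hMM : Mᵀ.rank = M.rank := Matrix.rank_transpose M
  -- the invertible matrix S
  set S : Matrix (Fin k → Fin n1) (Fin k → Fin n1) ℝ := M * Mᵀ + P with hS
  have hSker : ∀ x, S *ᵥ x = 0 → x = 0 := by
    intro x hx
    have h0 : (Mᵀ *ᵥ x) ⬝ᵥ (Mᵀ *ᵥ x) + (P *ᵥ x) ⬝ᵥ (P *ᵥ x) = 0 := by
      have e1 : x ⬝ᵥ (S *ᵥ x) = 0 := by rw [hx, dotProduct_zero]
      have e2 : x ⬝ᵥ (S *ᵥ x) = (Mᵀ *ᵥ x) ⬝ᵥ (Mᵀ *ᵥ x) + (P *ᵥ x) ⬝ᵥ (P *ᵥ x) := by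
        rw [hS, Matrix.add_mulVec, dotProduct_add]
        congr 1
        · rw [← Matrix.mulVec_mulVec, Matrix.dotProduct_mulVec, ← Matrix.mulVec_transpose]
        · conv_lhs => rw [← hPP]
          rw [← Matrix.mulVec_mulVec, Matrix.dotProduct_mulVec, ← Matrix.mulVec_transpose,
            hPsym]
      rw [← e2, e1]
    have ha := dotProduct_self_nonneg' (Mᵀ *ᵥ x)
    have hb := dotProduct_self_nonneg' (P *ᵥ x)
    have h1 : (Mᵀ *ᵥ x) ⬝ᵥ (Mᵀ *ᵥ x) = 0 := by linarith
    have h2 : (P *ᵥ x) ⬝ᵥ (P *ᵥ x) = 0 := by linarith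
    have hMx : Mᵀ *ᵥ x = 0 := dotProduct_self_eq_zero.mp h1
    have hPx : P *ᵥ x = 0 := dotProduct_self_eq_zero.mp h2
    have hfix := kron_fixed hn A12 C R hdec x hMx
    rw [← hP] at hfix
    rw [← hfix, hPx]
  have hSunit : IsUnit S := by
    rw [← Matrix.mulVec_injective_iff_isUnit]
    intro a b hab
    have h1 : S *ᵥ (a - b) = 0 := by
      have h2 := (S.mulVecLin).map_sub a b
      simp only [Matrix.mulVecLin_apply] at h2
      rw [h2, hab, sub_self]
    exact sub_eq_zero.mp (hSker _ h1)
  have hSdet : IsUnit S.det := (Matrix.isUnit_iff_isUnit_det S).mp hSunit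
  set G := Mᵀ * S⁻¹ with hG
  have hPS : P * S = P := by
    rw [hS, Matrix.mul_add, ← Matrix.mul_assoc, hPM, Matrix.zero_mul, zero_add, hPP]
  have hPSinv : P * S⁻¹ = P := by
    calc P * S⁻¹ = (P * S) * S⁻¹ := by rw [hPS]
      _ = P * (S * S⁻¹) := by rw [Matrix.mul_assoc]
      _ = P := by rw [Matrix.mul_nonsing_inv _ hSdet, Matrix.mul_one]
  have hMG : M * G = 1 - P := by
    have hMMt : M * Mᵀ = S - P := by rw [hS, add_sub_cancel_right]
    calc M * G = (M * Mᵀ) * S⁻¹ := by rw [hG, Matrix.mul_assoc]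
      _ = (S - P) * S⁻¹ := by rw [hMMt]
      _ = S * S⁻¹ - P * S⁻¹ := by rw [Matrix.sub_mul]
      _ = 1 - P := by rw [Matrix.mul_nonsing_inv _ hSdet, hPSinv]
  -- the rank-preserving transformation
  set X := -(P * L * Gᵀ) with hX
  set Y := -(G * L) with hY
  set U := Matrix.fromBlocks (1 : Matrix (Fin k → Fin n1) (Fin k → Fin n1) ℝ) X
    (0 : Matrix (Σ i : Fin k, ∀ j : Fin k, Fin (mCol n1 n2 n1 i j)) (Fin k → Fin n1) ℝ)
    (1 : Matrix (Σ i : Fin k, ∀ j : Fin k, Fin (mCol n1 n2 n1 i j)) (Σ i : Fin k, ∀ j : Fin k, Fin (mCol n1 n2 n1 i j)) ℝ) with hU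
  set V := Matrix.fromBlocks (1 : Matrix (Fin k → Fin n1) (Fin k → Fin n1) ℝ)
    (0 : Matrix (Fin k → Fin n1) (Σ i : Fin k, ∀ j : Fin k, Fin (mCol n1 n2 n1 i j)) ℝ) Y
    (1 : Matrix (Σ i : Fin k, ∀ j : Fin k, Fin (mCol n1 n2 n1 i j)) (Σ i : Fin k, ∀ j : Fin k, Fin (mCol n1 n2 n1 i j)) ℝ) with hV
  have hUdet : IsUnit U.det := by
    rw [hU, Matrix.det_fromBlocks_zero₂₁, Matrix.det_one, Matrix.det_one, mul_one]
    exact isUnit_one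
  have hVdet : IsUnit V.det := by
    rw [hV, Matrix.det_fromBlocks_zero₁₂, Matrix.det_one, Matrix.det_one, mul_one]
    exact isUnit_one
  set N := Matrix.fromBlocks L M Mᵀ 0 with hN
  have hGtMt : Gᵀ * Mᵀ = 1 - P := by
    rw [← Matrix.transpose_mul, hMG, Matrix.transpose_sub, Matrix.transpose_one, hPsym]
  have hkey : L + X * Mᵀ + M * Y = P * L * P := by
    have e1 : X * Mᵀ = -(P * L * (1 - P)) := by
      rw [hX, Matrix.neg_mul, Matrix.mul_assoc, Matrix.mul_assoc, hGtMt, ← Matrix.mul_assoc]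
    have e2 : M * Y = -((1 - P) * L) := by
      rw [hY, Matrix.mul_neg, ← Matrix.mul_assoc, hMG]
    rw [e1, e2]
    noncomm_ring
  have hUNV : U * N * V = Matrix.fromBlocks (P * L * P) M Mᵀ (0 : Matrix _ _ ℝ) := by
    have h1 : U * N = Matrix.fromBlocks (L + X * Mᵀ) M Mᵀ 0 := by
      rw [hU, hN, Matrix.fromBlocks_multiply]
      simp
    have h2 : (U * N) * V = Matrix.fromBlocks (L + X * Mᵀ + M * Y) M Mᵀ 0 := by
      rw [h1, hV, Matrix.fromBlocks_multiply]
      simp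
    rw [h2, hkey]
  have hrankN : N.rank = (Matrix.fromBlocks (P * L * P) M Mᵀ (0 : Matrix _ _ ℝ)).rank := by
    rw [← hUNV, Matrix.rank_mul_eq_left_of_isUnit_det V (U * N) hVdet,
      Matrix.rank_mul_eq_right_of_isUnit_det U N hUdet]
  -- final sandwich
  have hPA : P * (P * L * P) = P * L * P := by
    rw [← Matrix.mul_assoc, ← Matrix.mul_assoc, hPP]
  have hAP : (P * L * P) * P = P * L * P := by
    rw [Matrix.mul_assoc, hPP]
  have hfinal := rank_fromBlocks_kernel_proj (P * L * P) M P hPsym hPM hPA hAP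
  rw [hrankN, hfinal, hMM]
  have hle : (n1 - n2) ^ k ≤ n1 ^ k := Nat.pow_le_pow_left (Nat.sub_le _ _) k
  omega
end split
end
end

section
/- Let A12 ∈ ℝ^{n1×n2} have full column rank with n2 < n1, let R = I_{n1} − A12(A12ᵀA12)⁻¹A12ᵀ, let Ĩ ∈ ℝ^{n1×(n1−n2)} satisfy that RĨ has full column rank n1 − n2, let k be a positive integer, and let L ∈ ℝ^{n1^k × n1^k} satisfy rank(R^{⊗k} L R^{⊗k}) = (n1 − n2)^k. Set M̃ = M_k^{Ĩ}(A12), which has n1^k − (n1−n2)^k columns. Then the square block matrix [[L, M̃], [M̃ᵀ, 0]] of size 2n1^k − (n1−n2)^k is invertible; in particular, for every right-hand side (b, 0) the augmented linear system L ŵ + M̃ Ω = b, M̃ᵀ ŵ = 0 has a unique solution (ŵ, Ω). -/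
open Matrix

noncomputable section

/-! ### Auxiliary material -/

def pk' {k : ℕ} {α β : Fin k → Type*} (M : ∀ j, Matrix (α j) (β j) ℝ) :
    Matrix (∀ j, α j) (∀ j, β j) ℝ := Matrix.of fun r c => ∏ j, M j (r j) (c j)

theorem pk'_mul {k : ℕ} {α β γ : Fin k → Type*} [∀ j, Fintype (β j)]
    (M : ∀ j, Matrix (α j) (β j) ℝ) (N : ∀ j, Matrix (β j) (γ j) ℝ) :
    pk' M * pk' N = pk' (fun j => M j * N j) := by
  ext r c
  simp only [pk', Matrix.mul_apply, Matrix.of_apply]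
  rw [Fintype.prod_sum (fun j t => M j (r j) t * N j t (c j))]
  simp [Finset.prod_mul_distrib]

theorem pk'_one {k : ℕ} {α : Fin k → Type*} [∀ j, Fintype (α j)] [∀ j, DecidableEq (α j)] :
    pk' (fun j => (1 : Matrix (α j) (α j) ℝ)) = 1 := by
  ext r c
  simp only [pk', Matrix.of_apply, Matrix.one_apply]
  rw [Finset.prod_boole]
  simp [funext_iff]

theorem pk'_zero {k : ℕ} {α β : Fin k → Type*} [∀ j, Fintype (β j)]
    (M : ∀ j, Matrix (α j) (β j) ℝ) (j0 : Fin k) (h : M j0 = 0) : pk' M = 0 := by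
  ext r c
  simp only [pk', Matrix.of_apply, Matrix.zero_apply]
  exact Finset.prod_eq_zero (Finset.mem_univ j0) (by simp [h])

theorem pk'_transpose {k : ℕ} {α β : Fin k → Type*} (M : ∀ j, Matrix (α j) (β j) ℝ) :
    (pk' M)ᵀ = pk' (fun j => (M j)ᵀ) := rfl

theorem mul_submatrix_id {l m n o : Type*} [Fintype m] (X : Matrix l m ℝ) (M : Matrix m n ℝ)
    (e : o → n) : X * M.submatrix id e = (X * M).submatrix id e := by
  ext r c; simp [Matrix.mul_apply, Matrix.submatrix]

theorem submatrix_id_mul {l m n o : Type*} [Fintype m] (M : Matrix l m ℝ) (X : Matrix m n ℝ)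
    (e : o → l) : M.submatrix e id * X = (M * X).submatrix e id := by
  ext r c; simp [Matrix.mul_apply, Matrix.submatrix]

theorem submatrix_mul_submatrix {l m n o p : Type*} [Fintype m] (M : Matrix l m ℝ)
    (N : Matrix m n ℝ) (e : o → l) (f : p → n) :
    M.submatrix e id * N.submatrix id f = (M * N).submatrix e f := by
  ext r c; simp [Matrix.mul_apply, Matrix.submatrix]

section facs
variable {n p q k : ℕ}

def mFac (B : Matrix (Fin n) (Fin q) ℝ) (A : Matrix (Fin n) (Fin p) ℝ) (i j : Fin k) :
    Matrix (Fin n) (Fin (mCol q p n i j)) ℝ :=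
  if h1 : j < i then B.submatrix id (Fin.cast (by simp [mCol, h1]))
  else if h2 : j = i then A.submatrix id (Fin.cast (by simp [mCol, h1, h2]))
  else (1 : Matrix (Fin n) (Fin n) ℝ).submatrix id (Fin.cast (by simp [mCol, h1, h2]))

theorem mBlock_eq_pk' (B : Matrix (Fin n) (Fin q) ℝ) (A : Matrix (Fin n) (Fin p) ℝ) (i : Fin k) :
    mBlock B A i = pk' (mFac B A i) := by
  ext r c
  simp only [mBlock, pk', Matrix.of_apply]
  refine Finset.prod_congr rfl fun j _ => ?_
  by_cases h1 : j < i
  · simp [mFac, h1]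
  · by_cases h2 : j = i <;> [skip; skip] <;> simp [mFac, h1, h2] <;> rfl

def wFac (W1 : Matrix (Fin q) (Fin n) ℝ) (W2 : Matrix (Fin p) (Fin n) ℝ) (m j : Fin k) :
    Matrix (Fin (mCol q p n m j)) (Fin n) ℝ :=
  if h1 : j < m then W1.submatrix (Fin.cast (by simp [mCol, h1])) id
  else if h2 : j = m then W2.submatrix (Fin.cast (by simp [mCol, h1, h2])) id
  else (1 : Matrix (Fin n) (Fin n) ℝ).submatrix (Fin.cast (by simp [mCol, h1, h2])) id

theorem submatrix_one_cast {a b : ℕ} (h : a = b) :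
    (1 : Matrix (Fin b) (Fin b) ℝ).submatrix (Fin.cast h) (Fin.cast h) = 1 :=
  Matrix.submatrix_one_equiv (α := ℝ) (finCongr h)

theorem mFac_lt {B : Matrix (Fin n) (Fin q) ℝ} {A : Matrix (Fin n) (Fin p) ℝ} {i j : Fin k}
    (h : j < i) : mFac B A i j = B.submatrix id (Fin.cast (by simp [mCol, h])) := by
  unfold mFac; rw [dif_pos h]

theorem mFac_self {B : Matrix (Fin n) (Fin q) ℝ} {A : Matrix (Fin n) (Fin p) ℝ} {i : Fin k} :
    mFac B A i i = A.submatrix id (Fin.cast (by simp [mCol])) := by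
  unfold mFac; rw [dif_neg (lt_irrefl i), dif_pos rfl]

theorem mFac_gt {B : Matrix (Fin n) (Fin q) ℝ} {A : Matrix (Fin n) (Fin p) ℝ} {i j : Fin k}
    (h : i < j) : mFac B A i j
      = (1 : Matrix (Fin n) (Fin n) ℝ).submatrix id
          (Fin.cast (by simp [mCol, h.ne', not_lt_of_gt h])) := by
  unfold mFac; rw [dif_neg (by omega : ¬ j < i), dif_neg (by omega : ¬ j = i)]

theorem wFac_lt {W1 : Matrix (Fin q) (Fin n) ℝ} {W2 : Matrix (Fin p) (Fin n) ℝ} {m j : Fin k}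
    (h : j < m) : wFac W1 W2 m j = W1.submatrix (Fin.cast (by simp [mCol, h])) id := by
  unfold wFac; rw [dif_pos h]

theorem wFac_self {W1 : Matrix (Fin q) (Fin n) ℝ} {W2 : Matrix (Fin p) (Fin n) ℝ} {m : Fin k} :
    wFac W1 W2 m m = W2.submatrix (Fin.cast (by simp [mCol])) id := by
  unfold wFac; rw [dif_neg (lt_irrefl m), dif_pos rfl]

theorem wFac_gt {W1 : Matrix (Fin q) (Fin n) ℝ} {W2 : Matrix (Fin p) (Fin n) ℝ} {m j : Fin k}
    (h : m < j) : wFac W1 W2 m j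
      = (1 : Matrix (Fin n) (Fin n) ℝ).submatrix
          (Fin.cast (by simp [mCol, h.ne', not_lt_of_gt h])) id := by
  unfold wFac; rw [dif_neg (by omega : ¬ j < m), dif_neg (by omega : ¬ j = m)]

theorem wFac_mul_mFac_self {W1 : Matrix (Fin q) (Fin n) ℝ} {W2 : Matrix (Fin p) (Fin n) ℝ}
    {B : Matrix (Fin n) (Fin q) ℝ} {A : Matrix (Fin n) (Fin p) ℝ}
    (hW1B : W1 * B = 1) (hW2A : W2 * A = 1) (m j : Fin k) :
    wFac W1 W2 m j * mFac B A m j = 1 := by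
  rcases lt_trichotomy j m with h1 | h1 | h1
  · rw [wFac_lt h1, mFac_lt h1, submatrix_mul_submatrix, hW1B, submatrix_one_cast]
  · subst h1; rw [wFac_self, mFac_self, submatrix_mul_submatrix, hW2A, submatrix_one_cast]
  · rw [wFac_gt h1, mFac_gt h1, submatrix_mul_submatrix, one_mul, submatrix_one_cast]

theorem wFac_mul_mFac_lt {W1 : Matrix (Fin q) (Fin n) ℝ} {W2 : Matrix (Fin p) (Fin n) ℝ}
    {B : Matrix (Fin n) (Fin q) ℝ} {A : Matrix (Fin n) (Fin p) ℝ}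
    (hW1A : W1 * A = 0) (m i : Fin k) (h : i < m) :
    wFac W1 W2 m i * mFac B A i i = 0 := by
  rw [wFac_lt h, mFac_self, submatrix_mul_submatrix, hW1A]
  ext r c; simp

theorem wFac_mul_mFac_gt {W1 : Matrix (Fin q) (Fin n) ℝ} {W2 : Matrix (Fin p) (Fin n) ℝ}
    {B : Matrix (Fin n) (Fin q) ℝ} {A : Matrix (Fin n) (Fin p) ℝ}
    (hW2B : W2 * B = 0) (m i : Fin k) (h : m < i) :
    wFac W1 W2 m m * mFac B A i m = 0 := by
  rw [wFac_self, mFac_lt h, submatrix_mul_submatrix, hW2B]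
  ext r c; simp

theorem const_mul_mFac_eq_zero {κ : Type*} {Y : Matrix κ (Fin n) ℝ} {B : Matrix (Fin n) (Fin q) ℝ}
    {A : Matrix (Fin n) (Fin p) ℝ} (hYA : Y * A = 0) (i : Fin k) :
    Y * mFac B A i i = 0 := by
  rw [mFac_self, mul_submatrix_id, hYA]
  ext r c; simp

theorem mFacT_mul_zero {κ : Type*} {Y : Matrix (Fin n) κ ℝ} {B : Matrix (Fin n) (Fin q) ℝ}
    {A : Matrix (Fin n) (Fin p) ℝ} (hAY : Aᵀ * Y = 0) (i : Fin k) :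
    (mFac B A i i)ᵀ * Y = 0 := by
  rw [mFac_self, Matrix.transpose_submatrix, submatrix_id_mul, hAY]
  ext r c; simp

theorem mFull_mulVec (B : Matrix (Fin n) (Fin q) ℝ) (A : Matrix (Fin n) (Fin p) ℝ)
    (Ω : (Σ i : Fin k, ∀ j : Fin k, Fin (mCol q p n i j)) → ℝ) :
    (mFull k B A).mulVec Ω = ∑ i, (mBlock B A i).mulVec (fun c => Ω ⟨i, c⟩) := by
  ext r
  simp only [Matrix.mulVec, dotProduct, mFull, Matrix.of_apply, Finset.sum_apply]
  rw [Finset.sum_sigma']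
  rfl

theorem mFull_transpose_mulVec (B : Matrix (Fin n) (Fin q) ℝ) (A : Matrix (Fin n) (Fin p) ℝ)
    (w : (Fin k → Fin n) → ℝ) (i : Fin k) (ci : ∀ j : Fin k, Fin (mCol q p n i j)) :
    (mFull k B A)ᵀ.mulVec w ⟨i, ci⟩ = (mBlock B A i)ᵀ.mulVec w ci := rfl

end facs

theorem telescope_sum {a b n1 : ℕ} (hab : a + b = n1) :
    ∀ k : ℕ, (∑ i ∈ Finset.range k, a ^ i * b * n1 ^ (k - 1 - i)) + a ^ k = n1 ^ k := by
  intro k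
  induction k with
  | zero => simp
  | succ k ih =>
    rw [Finset.sum_range_succ]
    have h1 : ∀ i ∈ Finset.range k, a ^ i * b * n1 ^ (k + 1 - 1 - i)
        = n1 * (a ^ i * b * n1 ^ (k - 1 - i)) := by
      intro i hi
      have hik : i < k := Finset.mem_range.mp hi
      have : k + 1 - 1 - i = (k - 1 - i) + 1 := by omega
      rw [this, pow_succ]
      ring
    rw [Finset.sum_congr rfl h1, ← Finset.mul_sum]
    have h2 : k + 1 - 1 - k = 0 := by omega
    rw [h2, pow_zero, mul_one, pow_succ, pow_succ]
    rw [← hab] at ih ⊢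
    rw [← ih]
    ring

theorem prodCol {q p n : ℕ} : ∀ (k iv : ℕ), iv < k →
    (∏ j ∈ Finset.range k, (if j < iv then q else if j = iv then p else n))
      = q ^ iv * p * n ^ (k - 1 - iv) := by
  intro k
  induction k with
  | zero => omega
  | succ k ih =>
    intro iv hiv
    rw [Finset.prod_range_succ]
    rcases Nat.lt_or_ge iv k with h | h
    · rw [ih iv h]
      have hk1 : ¬ k < iv := by omega
      have hk2 : ¬ k = iv := by omega
      rw [if_neg hk1, if_neg hk2]
      have : k + 1 - 1 - iv = (k - 1 - iv) + 1 := by omega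
      rw [this, pow_succ]; ring
    · have hiv' : iv = k := by omega
      subst hiv'
      rw [if_neg (lt_irrefl iv), if_pos rfl]
      have h3 : (∏ j ∈ Finset.range iv, (if j < iv then q else if j = iv then p else n))
          = q ^ iv := by
        rw [Finset.prod_congr rfl (fun j hj => if_pos (Finset.mem_range.mp hj)),
          Finset.prod_const, Finset.card_range]
      rw [h3]
      have h4 : iv + 1 - 1 - iv = 0 := by omega
      rw [h4, pow_zero, mul_one]

theorem mulVec_inj_of_rank {m c : Type*} [Fintype m] [Fintype c] [DecidableEq c]
    (M : Matrix m c ℝ) (h : M.rank = Fintype.card c) :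
    ∀ v, M.mulVec v = 0 → v = 0 := by
  intro v hv
  have hrn := M.mulVecLin.finrank_range_add_finrank_ker
  rw [Module.finrank_fintype_fun_eq_card] at hrn
  have hker : Module.finrank ℝ (LinearMap.ker M.mulVecLin) = 0 := by
    have : M.rank = Module.finrank ℝ (LinearMap.range M.mulVecLin) := rfl
    omega
  have hbot : LinearMap.ker M.mulVecLin = ⊥ := Submodule.finrank_eq_zero.mp hker
  have : v ∈ LinearMap.ker M.mulVecLin := by simpa [Matrix.mulVecLin_apply] using hv
  simpa [hbot] using this

theorem matrix_eq_of_mulVec {a b : Type*} [Fintype b] [DecidableEq b]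
    {M N : Matrix a b ℝ} (h : ∀ v, M.mulVec v = N.mulVec v) : M = N := by
  ext i j
  have := congrFun (h (Pi.single j 1)) i
  simpa [Matrix.mulVec_single] using this

theorem gram_isUnit {a b : Type*} [Fintype a] [Fintype b] [DecidableEq b]
    (M : Matrix a b ℝ) (h : ∀ v, M.mulVec v = 0 → v = 0) : IsUnit (Mᵀ * M) := by
  rw [← Matrix.mulVec_injective_iff_isUnit]
  have hker : ∀ v, (Mᵀ * M).mulVec v = 0 → v = 0 := by
    intro v hv
    have hz : (M.mulVec v) ⬝ᵥ (M.mulVec v) = 0 := by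
      rw [Matrix.dotProduct_mulVec, ← Matrix.mulVec_transpose, Matrix.mulVec_mulVec, hv]
      simp
    exact h v (dotProduct_self_eq_zero.mp hz)
  intro u w huw
  have h0 : (Mᵀ * M).mulVec (u - w) = 0 := by
    rw [Matrix.mulVec_sub, huw, sub_self]
  exact sub_eq_zero.mp (hker _ h0)

theorem mulVec_injective_of_ker {a b : Type*} [Fintype b]
    (M : Matrix a b ℝ) (h : ∀ v, M.mulVec v = 0 → v = 0) :
    Function.Injective M.mulVec := by
  intro u w huw
  have h0 : M.mulVec (u - w) = 0 := by rw [Matrix.mulVec_sub, huw, sub_self]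
  exact sub_eq_zero.mp (h _ h0)

theorem mulVec_sumVec {a b ι : Type*} [Fintype b] [Fintype ι] (M : Matrix a b ℝ)
    (f : ι → b → ℝ) : M.mulVec (∑ i, f i) = ∑ i, M.mulVec (f i) := by
  have h := map_sum M.mulVecLin f Finset.univ
  simp only [Matrix.mulVecLin_apply] at h
  exact h

theorem stmt17_aux {n1 n2 : ℕ} (hn : n2 < n1)
    (A12 : Matrix (Fin n1) (Fin n2) ℝ) (R : Matrix (Fin n1) (Fin n1) ℝ)
    (Itil : Matrix (Fin n1) (Fin (n1 - n2)) ℝ)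
    (U : Matrix (Fin n1) (Fin (n1 - n2)) ℝ)
    (V : Matrix (Fin (n1 - n2)) (Fin n1) ℝ)
    (X : Matrix (Fin n2) (Fin n1) ℝ)
    (hVA : V * A12 = 0) (hVI : V * Itil = 1) (hVU : V * U = 1)
    (hXA : X * A12 = 1) (hXI : X * Itil = 0) (hAtU : A12ᵀ * U = 0)
    (hUV : U * V = R)
    (k : ℕ)
    (L : Matrix (Fin k → Fin n1) (Fin k → Fin n1) ℝ)
    (hL : (kronPow k R * L * kronPow k R).rank = (n1 - n2) ^ k) :
    IsUnit (Matrix.fromBlocks L (mFull k Itil A12) (mFull k Itil A12)ᵀ 0)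
    ∧ Fintype.card
        ((Fin k → Fin n1) ⊕ (Σ i : Fin k, ∀ j : Fin k, Fin (mCol (n1 - n2) n2 n1 i j)))
        = 2 * n1 ^ k - (n1 - n2) ^ k
    ∧ ∀ b : (Fin k → Fin n1) → ℝ,
        ∃! wΩ : ((Fin k → Fin n1) → ℝ)
            × ((Σ i : Fin k, ∀ j : Fin k, Fin (mCol (n1 - n2) n2 n1 i j)) → ℝ),
          L.mulVec wΩ.1 + (mFull k Itil A12).mulVec wΩ.2 = b
          ∧ (mFull k Itil A12)ᵀ.mulVec wΩ.1 = 0 := by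
  -- Kronecker-level matrices
  have hPfact : kronPow k R = pk' (fun _ : Fin k => U) * pk' (fun _ : Fin k => V) := by
    have h0 : kronPow k R = pk' (fun _ : Fin k => R) := rfl
    rw [h0, pk'_mul]
    exact congrArg pk' (funext fun _ => hUV.symm)
  have hVpkU : pk' (fun _ : Fin k => V) * pk' (fun _ : Fin k => U) = 1 := by
    rw [pk'_mul]
    exact (congrArg pk' (funext fun _ => hVU)).trans pk'_one
  have hWW : ∀ m : Fin k, pk' (wFac V X m) * mBlock Itil A12 m = 1 := by
    intro m
    rw [mBlock_eq_pk', pk'_mul]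
    exact (congrArg pk' (funext fun j => wFac_mul_mFac_self hVI hXA m j)).trans pk'_one
  have hWW0 : ∀ m i : Fin k, i ≠ m → pk' (wFac V X m) * mBlock Itil A12 i = 0 := by
    intro m i hne
    rw [mBlock_eq_pk', pk'_mul]
    rcases hne.lt_or_gt with h | h
    · exact pk'_zero _ i (wFac_mul_mFac_lt hVA m i h)
    · exact pk'_zero _ m (wFac_mul_mFac_gt hXI m i h)
  have hVMB : ∀ i : Fin k, pk' (fun _ : Fin k => V) * mBlock Itil A12 i = 0 := by
    intro i
    rw [mBlock_eq_pk', pk'_mul]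
    exact pk'_zero _ i (const_mul_mFac_eq_zero hVA i)
  have hMBtU : ∀ i : Fin k, (mBlock Itil A12 i)ᵀ * pk' (fun _ : Fin k => U) = 0 := by
    intro i
    rw [mBlock_eq_pk', pk'_transpose, pk'_mul]
    exact pk'_zero _ i (mFacT_mul_zero hAtU i)
  -- mulVec-level consequences
  have hVkill : ∀ x, pk' (fun _ : Fin k => V) *ᵥ ((mFull k Itil A12) *ᵥ x) = 0 := by
    intro x
    rw [mFull_mulVec, mulVec_sumVec]
    refine Finset.sum_eq_zero fun i _ => ?_
    rw [Matrix.mulVec_mulVec, hVMB i, Matrix.zero_mulVec]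
  have hWpick : ∀ (m : Fin k) x, pk' (wFac V X m) *ᵥ ((mFull k Itil A12) *ᵥ x)
      = fun c => x ⟨m, c⟩ := by
    intro m x
    rw [mFull_mulVec, mulVec_sumVec, Finset.sum_eq_single m]
    · rw [Matrix.mulVec_mulVec, hWW m, Matrix.one_mulVec]
    · intro i _ hne
      rw [Matrix.mulVec_mulVec, hWW0 m i hne, Matrix.zero_mulVec]
    · intro h; exact absurd (Finset.mem_univ m) h
  have hMtU : ∀ u, (mFull k Itil A12)ᵀ *ᵥ (pk' (fun _ : Fin k => U) *ᵥ u) = 0 := by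
    intro u
    funext c
    obtain ⟨i, ci⟩ := c
    rw [mFull_transpose_mulVec, Matrix.mulVec_mulVec, hMBtU i, Matrix.zero_mulVec]
    simp
  -- rank of the compressed matrix Z
  have hkron : kronPow k R * L * kronPow k R
      = pk' (fun _ : Fin k => U)
        * ((pk' (fun _ : Fin k => V) * L * pk' (fun _ : Fin k => U))
          * pk' (fun _ : Fin k => V)) := by
    rw [hPfact]
    simp only [Matrix.mul_assoc]
  have hZrank : (pk' (fun _ : Fin k => V) * L * pk' (fun _ : Fin k => U)).rank
      = Fintype.card (Fin k → Fin (n1 - n2)) := by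
    refine le_antisymm ((Matrix.rank_le_card_width _).trans_eq ?_) ?_
    · simp [Fintype.card_fun]
    · calc Fintype.card (Fin k → Fin (n1 - n2)) = (n1 - n2) ^ k := by simp [Fintype.card_fun]
        _ = (kronPow k R * L * kronPow k R).rank := hL.symm
        _ ≤ ((pk' (fun _ : Fin k => V) * L * pk' (fun _ : Fin k => U))
              * pk' (fun _ : Fin k => V)).rank := by
            rw [hkron]; exact Matrix.rank_mul_le_right _ _
        _ ≤ (pk' (fun _ : Fin k => V) * L * pk' (fun _ : Fin k => U)).rank :=
            Matrix.rank_mul_le_left _ _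
  have hZinj := mulVec_inj_of_rank _ hZrank
  -- cardinalities
  have hcardCol : Fintype.card (Σ i : Fin k, ∀ j : Fin k, Fin (mCol (n1 - n2) n2 n1 i j))
      + (n1 - n2) ^ k = n1 ^ k := by
    rw [Fintype.card_sigma]
    have hterm : ∀ i : Fin k, Fintype.card (∀ j : Fin k, Fin (mCol (n1 - n2) n2 n1 i j))
        = (n1 - n2) ^ (i : ℕ) * n2 * n1 ^ (k - 1 - (i : ℕ)) := by
      intro i
      rw [Fintype.card_pi]
      have hm : ∀ j : Fin k, Fintype.card (Fin (mCol (n1 - n2) n2 n1 i j))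
          = (if (j : ℕ) < (i : ℕ) then n1 - n2 else if (j : ℕ) = (i : ℕ) then n2 else n1) := by
        intro j
        rw [Fintype.card_fin]
        unfold mCol
        simp only [Fin.lt_def, Fin.ext_iff]
      rw [Finset.prod_congr rfl fun j _ => hm j]
      rw [Fin.prod_univ_eq_prod_range
        (fun jv => if jv < (i : ℕ) then n1 - n2 else if jv = (i : ℕ) then n2 else n1) k]
      exact prodCol k i i.isLt
    rw [Finset.sum_congr rfl fun i _ => hterm i]
    rw [Fin.sum_univ_eq_sum_range (fun iv => (n1 - n2) ^ iv * n2 * n1 ^ (k - 1 - iv)) k]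
    exact telescope_sum (by omega) k
  have hf1 : Fintype.card (Fin k → Fin n1) = n1 ^ k := by simp [Fintype.card_fun]
  have hf2 : Fintype.card (Fin k → Fin (n1 - n2)) = (n1 - n2) ^ k := by
    simp [Fintype.card_fun]
  have hcard2 : Fintype.card
      ((Fin k → Fin n1) ⊕ (Σ i : Fin k, ∀ j : Fin k, Fin (mCol (n1 - n2) n2 n1 i j)))
      = 2 * n1 ^ k - (n1 - n2) ^ k := by
    rw [Fintype.card_sum]
    omega
  -- kernel of [M̃ | U^{⊗k}] is trivial
  have hGmker : ∀ v,
      (Matrix.fromCols (mFull k Itil A12) (pk' (fun _ : Fin k => U))) *ᵥ v = 0 → v = 0 := by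
    intro v hv
    rw [show v = Sum.elim (v ∘ Sum.inl) (v ∘ Sum.inr) from by funext s; cases s <;> rfl,
      Matrix.fromCols_mulVec_sumElim] at hv
    have hy : v ∘ Sum.inr = 0 := by
      have h1 := congrArg (fun z => pk' (fun _ : Fin k => V) *ᵥ z) hv
      beta_reduce at h1
      rw [Matrix.mulVec_add, hVkill, Matrix.mulVec_mulVec, hVpkU, Matrix.one_mulVec,
        zero_add, Matrix.mulVec_zero] at h1
      exact h1
    rw [hy, Matrix.mulVec_zero, add_zero] at hv
    have hx : v ∘ Sum.inl = 0 := by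
      funext c
      obtain ⟨m, cm⟩ := c
      have h4 := hWpick m (v ∘ Sum.inl)
      rw [hv, Matrix.mulVec_zero] at h4
      exact (congrFun h4.symm cm)
    funext s
    cases s with
    | inl a => exact congrFun hx a
    | inr a => exact congrFun hy a
  -- surjectivity of [M̃ | U^{⊗k}]
  have hcardSum : Fintype.card
      ((Σ i : Fin k, ∀ j : Fin k, Fin (mCol (n1 - n2) n2 n1 i j)) ⊕ (Fin k → Fin (n1 - n2)))
      = Fintype.card (Fin k → Fin n1) := by
    rw [Fintype.card_sum]
    omega
  have hGmSurj : ∀ b, ∃ vv,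
      (Matrix.fromCols (mFull k Itil A12) (pk' (fun _ : Fin k => U))) *ᵥ vv = b := by
    intro b
    have hinj' : Function.Injective
        ((Matrix.fromCols (mFull k Itil A12) (pk' (fun _ : Fin k => U))).submatrix id
          ⇑(Fintype.equivOfCardEq hcardSum).symm).mulVec := by
      apply mulVec_injective_of_ker
      intro u hu
      rw [Matrix.submatrix_mulVec_equiv] at hu
      have hu' : (Matrix.fromCols (mFull k Itil A12) (pk' (fun _ : Fin k => U)))
          *ᵥ (u ∘ ⇑(Fintype.equivOfCardEq hcardSum)) = 0 := by
        rw [Equiv.symm_symm, Function.comp_id] at hu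
        exact hu
      have h0 := hGmker _ hu'
      funext c
      have h1 := congrFun h0 ((Fintype.equivOfCardEq hcardSum).symm c)
      simpa using h1
    obtain ⟨u, hu⟩ :=
      Matrix.mulVec_surjective_iff_isUnit.mpr (Matrix.mulVec_injective_iff_isUnit.mp hinj') b
    refine ⟨u ∘ ⇑(Fintype.equivOfCardEq hcardSum), ?_⟩
    rw [Matrix.submatrix_mulVec_equiv, Equiv.symm_symm, Function.comp_id] at hu
    exact hu
  -- any element of ker M̃ᵀ is in the image of U^{⊗k}
  have hdecomp : ∀ w, (mFull k Itil A12)ᵀ *ᵥ w = 0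
      → ∃ y, w = pk' (fun _ : Fin k => U) *ᵥ y := by
    intro w hw
    obtain ⟨vv, hvv⟩ := hGmSurj w
    rw [show vv = Sum.elim (vv ∘ Sum.inl) (vv ∘ Sum.inr) from by funext s; cases s <;> rfl,
      Matrix.fromCols_mulVec_sumElim] at hvv
    have hz : (mFull k Itil A12)ᵀ *ᵥ ((mFull k Itil A12) *ᵥ (vv ∘ Sum.inl)) = 0 := by
      have h1 := congrArg (fun z => (mFull k Itil A12)ᵀ *ᵥ z) hvv
      beta_reduce at h1
      rw [Matrix.mulVec_add, hMtU, add_zero, hw] at h1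
      exact h1
    have hzz : (mFull k Itil A12) *ᵥ (vv ∘ Sum.inl) = 0 := by
      have hd : ((mFull k Itil A12) *ᵥ (vv ∘ Sum.inl))
          ⬝ᵥ ((mFull k Itil A12) *ᵥ (vv ∘ Sum.inl)) = 0 := by
        rw [Matrix.dotProduct_mulVec, ← Matrix.mulVec_transpose, hz, zero_dotProduct]
      exact dotProduct_self_eq_zero.mp hd
    exact ⟨vv ∘ Sum.inr, by rw [← hvv, hzz, zero_add]⟩
  -- trivial kernel of the saddle-point matrix
  have hKker : ∀ v,
      (Matrix.fromBlocks L (mFull k Itil A12) (mFull k Itil A12)ᵀ 0) *ᵥ v = 0 → v = 0 := by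
    intro v hv
    rw [show v = Sum.elim (v ∘ Sum.inl) (v ∘ Sum.inr) from by funext s; cases s <;> rfl,
      Matrix.fromBlocks_mulVec] at hv
    have h1 : L *ᵥ (v ∘ Sum.inl) + (mFull k Itil A12) *ᵥ (v ∘ Sum.inr) = 0 := by
      funext r; exact congrFun hv (Sum.inl r)
    have h2 : (mFull k Itil A12)ᵀ *ᵥ (v ∘ Sum.inl) = 0 := by
      have h2' : (mFull k Itil A12)ᵀ *ᵥ (v ∘ Sum.inl)
          + (0 : Matrix (Σ i : Fin k, ∀ j : Fin k, Fin (mCol (n1 - n2) n2 n1 i j))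
              (Σ i : Fin k, ∀ j : Fin k, Fin (mCol (n1 - n2) n2 n1 i j)) ℝ)
            *ᵥ (v ∘ Sum.inr) = 0 := by
        funext c; exact congrFun hv (Sum.inr c)
      rwa [Matrix.zero_mulVec, add_zero] at h2'
    obtain ⟨y, hy⟩ := hdecomp _ h2
    have hyzero : y = 0 := by
      refine hZinj y ?_
      have h3 := congrArg (fun z => pk' (fun _ : Fin k => V) *ᵥ z) h1
      beta_reduce at h3
      rw [Matrix.mulVec_add, hVkill, add_zero, Matrix.mulVec_zero, hy,
        Matrix.mulVec_mulVec, Matrix.mulVec_mulVec] at h3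
      exact h3
    rw [hyzero, Matrix.mulVec_zero] at hy
    rw [hy, Matrix.mulVec_zero, zero_add] at h1
    have hΩ : v ∘ Sum.inr = 0 := by
      funext c
      obtain ⟨m, cm⟩ := c
      have h4 := hWpick m (v ∘ Sum.inr)
      rw [h1, Matrix.mulVec_zero] at h4
      exact (congrFun h4.symm cm)
    funext s
    cases s with
    | inl a => exact congrFun hy a
    | inr a => exact congrFun hΩ a
  have hKunit : IsUnit (Matrix.fromBlocks L (mFull k Itil A12) (mFull k Itil A12)ᵀ 0) :=
    Matrix.mulVec_injective_iff_isUnit.mp (mulVec_injective_of_ker _ hKker)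
  refine ⟨hKunit, hcard2, ?_⟩
  intro b
  have hKdet := (Matrix.isUnit_iff_isUnit_det _).mp hKunit
  have hKK : (Matrix.fromBlocks L (mFull k Itil A12) (mFull k Itil A12)ᵀ 0)
      * (Matrix.fromBlocks L (mFull k Itil A12) (mFull k Itil A12)ᵀ 0)⁻¹ = 1 :=
    Matrix.mul_nonsing_inv _ hKdet
  have hKu : (Matrix.fromBlocks L (mFull k Itil A12) (mFull k Itil A12)ᵀ 0)
      *ᵥ ((Matrix.fromBlocks L (mFull k Itil A12) (mFull k Itil A12)ᵀ 0)⁻¹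
        *ᵥ (Sum.elim b 0)) = Sum.elim b 0 := by
    rw [Matrix.mulVec_mulVec, hKK, Matrix.one_mulVec]
  set u := (Matrix.fromBlocks L (mFull k Itil A12) (mFull k Itil A12)ᵀ 0)⁻¹
      *ᵥ (Sum.elim b 0) with hudef
  have husplit : u = Sum.elim (u ∘ Sum.inl) (u ∘ Sum.inr) := by funext s; cases s <;> rfl
  rw [husplit, Matrix.fromBlocks_mulVec] at hKu
  refine ⟨(u ∘ Sum.inl, u ∘ Sum.inr), ⟨?_, ?_⟩, ?_⟩
  · funext r; exact congrFun hKu (Sum.inl r)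
  · have h2' : (mFull k Itil A12)ᵀ *ᵥ (u ∘ Sum.inl)
        + (0 : Matrix (Σ i : Fin k, ∀ j : Fin k, Fin (mCol (n1 - n2) n2 n1 i j))
            (Σ i : Fin k, ∀ j : Fin k, Fin (mCol (n1 - n2) n2 n1 i j)) ℝ)
          *ᵥ (u ∘ Sum.inr) = 0 := by
      funext c; exact congrFun hKu (Sum.inr c)
    rwa [Matrix.zero_mulVec, add_zero] at h2'
  · rintro ⟨w', Ω'⟩ ⟨he1, he2⟩
    have hK2 : (Matrix.fromBlocks L (mFull k Itil A12) (mFull k Itil A12)ᵀ 0)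
        *ᵥ Sum.elim w' Ω' = Sum.elim b 0 := by
      rw [Matrix.fromBlocks_mulVec]
      dsimp only at he1 he2
      simp only [Sum.elim_comp_inl, Sum.elim_comp_inr]
      rw [he1, Matrix.zero_mulVec, add_zero, he2]
    have hinjK := mulVec_injective_of_ker _ hKker
    have heq : Sum.elim w' Ω' = u := by
      apply hinjK
      rw [hK2, husplit, Matrix.fromBlocks_mulVec]
      exact hKu.symm
    have hw' : w' = u ∘ Sum.inl := by funext r; exact congrFun heq (Sum.inl r)
    have hΩ' : Ω' = u ∘ Sum.inr := by funext c; exact congrFun heq (Sum.inr c)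
    simp [Prod.ext_iff, hw', hΩ']

/-- Saddle-point solvability for the sparse monolithic formulation: with `A12` of
full column rank (`n2 < n1`), `R = I - A12 (A12ᵀ A12)⁻¹ A12ᵀ`, `Ĩ` such that `R Ĩ`
has full column rank `n1 - n2`, and `L` with `rank (R^{⊗k} L R^{⊗k}) = (n1-n2)^k`,
the square block matrix `[[L, M̃], [M̃ᵀ, 0]]` with `M̃ = M_k^{Ĩ}(A12)`, of size
`2 n1^k - (n1-n2)^k`, is invertible; in particular for every right-hand side
`(b, 0)` the augmented system `L ŵ + M̃ Ω = b`, `M̃ᵀ ŵ = 0` has a unique solution. -/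
theorem stmt17 {n1 n2 : ℕ} (hn : n2 < n1) (A12 : Matrix (Fin n1) (Fin n2) ℝ)
    (hA : A12.rank = n2)
    (R : Matrix (Fin n1) (Fin n1) ℝ)
    (hR : R = 1 - A12 * (A12ᵀ * A12)⁻¹ * A12ᵀ)
    (Itil : Matrix (Fin n1) (Fin (n1 - n2)) ℝ)
    (hItil : (R * Itil).rank = n1 - n2)
    (k : ℕ) (hk : 0 < k)
    (L : Matrix (Fin k → Fin n1) (Fin k → Fin n1) ℝ)
    (hL : (kronPow k R * L * kronPow k R).rank = (n1 - n2) ^ k) :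
    IsUnit (Matrix.fromBlocks L (mFull k Itil A12) (mFull k Itil A12)ᵀ 0)
    ∧ Fintype.card
        ((Fin k → Fin n1) ⊕ (Σ i : Fin k, ∀ j : Fin k, Fin (mCol (n1 - n2) n2 n1 i j)))
        = 2 * n1 ^ k - (n1 - n2) ^ k
    ∧ ∀ b : (Fin k → Fin n1) → ℝ,
        ∃! wΩ : ((Fin k → Fin n1) → ℝ)
            × ((Σ i : Fin k, ∀ j : Fin k, Fin (mCol (n1 - n2) n2 n1 i j)) → ℝ),
          L.mulVec wΩ.1 + (mFull k Itil A12).mulVec wΩ.2 = b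
          ∧ (mFull k Itil A12)ᵀ.mulVec wΩ.1 = 0 := by
  have hAinj : ∀ v, A12.mulVec v = 0 → v = 0 :=
    mulVec_inj_of_rank A12 (by simpa using hA)
  have hGu : IsUnit (A12ᵀ * A12) := gram_isUnit A12 hAinj
  have hinvG : (A12ᵀ * A12)⁻¹ * (A12ᵀ * A12) = 1 :=
    Matrix.nonsing_inv_mul _ ((Matrix.isUnit_iff_isUnit_det _).mp hGu)
  have hRA : R * A12 = 0 := by
    rw [hR, Matrix.sub_mul, Matrix.one_mul, Matrix.mul_assoc (A12 * (A12ᵀ * A12)⁻¹) A12ᵀ A12,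
      Matrix.mul_assoc A12 (A12ᵀ * A12)⁻¹ (A12ᵀ * A12), hinvG, Matrix.mul_one, sub_self]
  have hRT : Rᵀ = R := by
    have hGt : (A12ᵀ * A12)ᵀ = A12ᵀ * A12 := by
      rw [Matrix.transpose_mul, Matrix.transpose_transpose]
    rw [hR, Matrix.transpose_sub, Matrix.transpose_one, Matrix.transpose_mul,
      Matrix.transpose_mul, Matrix.transpose_transpose, Matrix.transpose_nonsing_inv, hGt,
      Matrix.mul_assoc]
  have hAtR : A12ᵀ * R = 0 := by
    have h := congrArg Matrix.transpose hRA
    rw [Matrix.transpose_mul, hRT, Matrix.transpose_zero] at h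
    exact h
  have hRR : R * R = R := by
    nth_rewrite 2 [hR]
    rw [Matrix.mul_sub, Matrix.mul_one, ← Matrix.mul_assoc, ← Matrix.mul_assoc, hRA,
      Matrix.zero_mul, Matrix.zero_mul, sub_zero]
  have hUinj : ∀ v, (R * Itil).mulVec v = 0 → v = 0 :=
    mulVec_inj_of_rank (R * Itil) (by simpa using hItil)
  have hGuU : IsUnit ((R * Itil)ᵀ * (R * Itil)) := gram_isUnit (R * Itil) hUinj
  have hinvGu : ((R * Itil)ᵀ * (R * Itil))⁻¹ * ((R * Itil)ᵀ * (R * Itil)) = 1 :=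
    Matrix.nonsing_inv_mul _ ((Matrix.isUnit_iff_isUnit_det _).mp hGuU)
  have hRU : R * (R * Itil) = R * Itil := by rw [← Matrix.mul_assoc, hRR]
  have hAtU : A12ᵀ * (R * Itil) = 0 := by rw [← Matrix.mul_assoc, hAtR, Matrix.zero_mul]
  have hJU : (((R * Itil)ᵀ * (R * Itil))⁻¹ * (R * Itil)ᵀ) * (R * Itil) = 1 := by
    rw [Matrix.mul_assoc, hinvGu]
  have hApA : ((A12ᵀ * A12)⁻¹ * A12ᵀ) * A12 = 1 := by rw [Matrix.mul_assoc, hinvG]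
  have hJRA : ((((R * Itil)ᵀ * (R * Itil))⁻¹ * (R * Itil)ᵀ) * R) * A12 = 0 := by
    rw [Matrix.mul_assoc, hRA, Matrix.mul_zero]
  have hJRI : ((((R * Itil)ᵀ * (R * Itil))⁻¹ * (R * Itil)ᵀ) * R) * Itil = 1 := by
    rw [Matrix.mul_assoc, hJU]
  have hJRU : ((((R * Itil)ᵀ * (R * Itil))⁻¹ * (R * Itil)ᵀ) * R) * (R * Itil) = 1 := by
    rw [Matrix.mul_assoc, hRU, hJU]
  have hXA : (((A12ᵀ * A12)⁻¹ * A12ᵀ)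
      * (1 - Itil * ((((R * Itil)ᵀ * (R * Itil))⁻¹ * (R * Itil)ᵀ) * R))) * A12 = 1 := by
    rw [Matrix.mul_assoc, Matrix.sub_mul, Matrix.one_mul, Matrix.mul_assoc Itil, hJRA,
      Matrix.mul_zero, sub_zero, hApA]
  have hXI : (((A12ᵀ * A12)⁻¹ * A12ᵀ)
      * (1 - Itil * ((((R * Itil)ᵀ * (R * Itil))⁻¹ * (R * Itil)ᵀ) * R))) * Itil = 0 := by
    rw [Matrix.mul_assoc, Matrix.sub_mul, Matrix.one_mul, Matrix.mul_assoc Itil, hJRI,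
      Matrix.mul_one, sub_self, Matrix.mul_zero]
  have hrange : LinearMap.range (R * Itil).mulVecLin = LinearMap.ker (A12ᵀ).mulVecLin := by
    apply Submodule.eq_of_le_of_finrank_eq
    · rintro x ⟨y, rfl⟩
      simp only [LinearMap.mem_ker, Matrix.mulVecLin_apply, Matrix.mulVec_mulVec, hAtU,
        Matrix.zero_mulVec]
    · have h1 : Module.finrank ℝ (LinearMap.range (R * Itil).mulVecLin) = n1 - n2 := hItil
      have h2 := (A12ᵀ).mulVecLin.finrank_range_add_finrank_ker
      rw [Module.finrank_fintype_fun_eq_card, Fintype.card_fin] at h2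
      have h3 : (A12ᵀ).rank = n2 := by rw [Matrix.rank_transpose, hA]
      have h4 : (A12ᵀ).rank = Module.finrank ℝ (LinearMap.range (A12ᵀ).mulVecLin) := rfl
      rw [h1]
      omega
  have hUJR : (R * Itil) * ((((R * Itil)ᵀ * (R * Itil))⁻¹ * (R * Itil)ᵀ) * R) = R := by
    apply matrix_eq_of_mulVec
    intro v
    have hmem : R.mulVec v ∈ LinearMap.range (R * Itil).mulVecLin := by
      rw [hrange]
      simp only [LinearMap.mem_ker, Matrix.mulVecLin_apply, Matrix.mulVec_mulVec, hAtR,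
        Matrix.zero_mulVec]
    obtain ⟨y, hy⟩ := hmem
    simp only [Matrix.mulVecLin_apply] at hy
    rw [← Matrix.mulVec_mulVec v (R * Itil) ((((R * Itil)ᵀ * (R * Itil))⁻¹ * (R * Itil)ᵀ) * R),
      ← Matrix.mulVec_mulVec v (((R * Itil)ᵀ * (R * Itil))⁻¹ * (R * Itil)ᵀ) R,
      ← hy,
      Matrix.mulVec_mulVec y (((R * Itil)ᵀ * (R * Itil))⁻¹ * (R * Itil)ᵀ) (R * Itil),
      hJU, Matrix.one_mulVec]
  exact stmt17_aux hn A12 R Itil (R * Itil)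
    ((((R * Itil)ᵀ * (R * Itil))⁻¹ * (R * Itil)ᵀ) * R)
    (((A12ᵀ * A12)⁻¹ * A12ᵀ)
      * (1 - Itil * ((((R * Itil)ᵀ * (R * Itil))⁻¹ * (R * Itil)ᵀ) * R)))
    hJRA hJRI hJRU hXA hXI hAtU hUJR k L hL
end
end
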